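/- Let Γ = HNN(H, Σ, θ) and let 𝒯 be its Bass-Serre tree, with vertex set V(𝒯) = Γ/H, positive edge set E⁺(𝒯) = Γ/Σ, source map s(gΣ) = gH and range map r(gΣ) = g t⁻¹ H. Then for all g ∈ Γ, the geodesic distance in 𝒯 between the vertices H and g·H equals the length |g| of g (the number of occurrences of t^{±1} in a reduced expression of g, with |e| = 0). -/

import Mathlib

open HNNExtension

/-- The Bass-Serre tree of `Γ = HNN(H, Σ, θ)` as a graph on the vertex set `Γ/H`
(`H` embedded via `of`): two cosets are adjacent when they are the source `gH` and
the range `g t⁻¹ H` of some edge `gΣ`. -/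
def bassSerreGraph {G : Type*} [Group G] (A B : Subgroup G) (φ : A ≃* B) :
    SimpleGraph (HNNExtension G A B φ ⧸ (of : G →* HNNExtension G A B φ).range) where
  Adj u v := u ≠ v ∧ ∃ g : HNNExtension G A B φ,
    (u = QuotientGroup.mk g ∧ v = QuotientGroup.mk (g * t⁻¹)) ∨
    (v = QuotientGroup.mk g ∧ u = QuotientGroup.mk (g * t⁻¹))
  symm := by constructor; rintro u v ⟨hne, g, hg⟩; exact ⟨hne.symm, g, hg.symm⟩
  loopless := by constructor; rintro v ⟨hne, _⟩; exact hne rfl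

namespace BassSerreAux

open HNNExtension NormalWord

variable {G : Type*} [Group G] {A B : Subgroup G} {φ : A ≃* B}

/-- Multiplying a reduced word on the right by an element of the base group
preserves the length. -/
theorem exists_prod_mul_of (w : ReducedWord G A B) (h : G) :
    ∃ w' : ReducedWord G A B, w'.prod φ = w.prod φ * of h ∧
      w'.toList.length = w.toList.length := by
  rcases List.eq_nil_or_concat w.toList with hnil | ⟨l, a, hl⟩
  · refine ⟨⟨w.head * h, [], List.isChain_nil⟩, ?_, by simp [hnil]⟩
    simp [ReducedWord.prod, hnil]
  · rw [List.concat_eq_append] at hl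
    have hch := w.chain
    rw [hl, List.isChain_append] at hch
    refine ⟨⟨w.head, l ++ [(a.1, a.2 * h)], ?_⟩, ?_, by simp [hl]⟩
    · rw [List.isChain_append]
      refine ⟨hch.1, List.isChain_singleton _, ?_⟩
      intro x hx y hy
      simp only [List.head?_cons, Option.mem_def, Option.some.injEq] at hy
      subst hy
      exact fun h' => hch.2.2 x hx a (by simp) h'
    · show of w.head * _ = of w.head * _ * of h
      rw [hl]
      simp [mul_assoc]

theorem exists_conj (u : ℤˣ) (x : G) (hx : x ∈ toSubgroup A B u) :
    ∃ y : G, t ^ (u : ℤ) * of x * t ^ (-(u : ℤ)) = (of y : HNNExtension G A B φ) := by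
  rcases Int.units_eq_one_or u with rfl | rfl
  · exact ⟨φ ⟨x, hx⟩, by rw [equiv_eq_conj (φ := φ) ⟨x, hx⟩]; simp⟩
  · refine ⟨φ.symm ⟨x, hx⟩, ?_⟩
    rw [equiv_symm_eq_conj (φ := φ) ⟨x, hx⟩]
    simp

/-- Multiplying a reduced word on the right by `t^u` increases length by at most one. -/
theorem exists_prod_mul_t (w : ReducedWord G A B) (u : ℤˣ) :
    ∃ w' : ReducedWord G A B, w'.prod φ = w.prod φ * t ^ (u : ℤ) ∧
      w'.toList.length ≤ w.toList.length + 1 := by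
  rcases List.eq_nil_or_concat w.toList with hnil | ⟨l, a, hl⟩
  · refine ⟨⟨w.head, [(u, 1)], List.isChain_singleton _⟩, ?_, by simp [hnil]⟩
    simp [ReducedWord.prod, hnil]
  · rw [List.concat_eq_append] at hl
    have hch := w.chain
    rw [hl, List.isChain_append] at hch
    by_cases hc : a.2 ∈ toSubgroup A B a.1 ∧ a.1 = -u
    · obtain ⟨y, hy⟩ := exists_conj (φ := φ) a.1 a.2 hc.1
      have hu : (u : ℤ) = -(a.1 : ℤ) := by
        rw [hc.2]; simp
      obtain ⟨w', hw'p, hw'l⟩ := exists_prod_mul_of (φ := φ) ⟨w.head, l, hch.1⟩ y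
      refine ⟨w', ?_, ?_⟩
      · rw [hw'p]
        show of w.head * _ * of y = of w.head * _ * t ^ (u : ℤ)
        rw [hl, hu, ← hy]
        simp [mul_assoc]
      · rw [hw'l, hl]
        simp only [List.length_append, List.length_cons, List.length_nil]
        omega
    · have ha : a.2 ∈ toSubgroup A B a.1 → a.1 = u := by
        intro hmem
        by_contra hne
        apply hc
        refine ⟨hmem, ?_⟩
        rcases Int.units_eq_one_or a.1 with h1 | h1 <;>
          rcases Int.units_eq_one_or u with h2 | h2 <;> simp_all
      refine ⟨⟨w.head, w.toList ++ [(u, 1)], ?_⟩, ?_, by simp⟩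
      · rw [List.isChain_append]
        refine ⟨w.chain, List.isChain_singleton _, ?_⟩
        intro x hx y hy
        rw [hl, List.getLast?_concat] at hx
        simp only [Option.mem_def, Option.some.injEq] at hx
        simp only [List.head?_cons, Option.mem_def, Option.some.injEq] at hy
        subst hx; subst hy
        exact ha
      · show of w.head * _ = of w.head * _ * t ^ (u : ℤ)
        simp [mul_assoc]

theorem adj_or_eq (x : HNNExtension G A B φ) (u : ℤˣ) :
    (bassSerreGraph A B φ).Adj (QuotientGroup.mk x) (QuotientGroup.mk (x * t ^ (u : ℤ))) ∨
    (QuotientGroup.mk x :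
        HNNExtension G A B φ ⧸ (of : G →* HNNExtension G A B φ).range) =
      QuotientGroup.mk (x * t ^ (u : ℤ)) := by
  by_cases h : (QuotientGroup.mk x :
      HNNExtension G A B φ ⧸ (of : G →* HNNExtension G A B φ).range) =
      QuotientGroup.mk (x * t ^ (u : ℤ))
  · exact Or.inr h
  · refine Or.inl ⟨h, ?_⟩
    rcases Int.units_eq_one_or u with rfl | rfl
    · exact ⟨x * t, Or.inr ⟨by norm_num, by simp⟩⟩
    · exact ⟨x, Or.inl ⟨rfl, by norm_num⟩⟩

theorem mk_mul_of (x : HNNExtension G A B φ) (h : G) :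
    (QuotientGroup.mk (x * of h) :
        HNNExtension G A B φ ⧸ (of : G →* HNNExtension G A B φ).range) =
      QuotientGroup.mk x := by
  rw [QuotientGroup.eq]
  exact ⟨h⁻¹, by simp [mul_assoc]⟩

/-- Upper bound: there is a walk from the base vertex to `gH` of length at most the
word length of any expression of `g`. -/
theorem exists_walk (h : G) (l : List (ℤˣ × G)) :
    ∃ p : (bassSerreGraph A B φ).Walk (QuotientGroup.mk 1)
      (QuotientGroup.mk (of h * (l.map (fun x => t ^ (x.1 : ℤ) * of x.2)).prod)),
      p.length ≤ l.length := by
  induction l using List.reverseRecOn with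
  | nil =>
      have he : (QuotientGroup.mk 1 :
          HNNExtension G A B φ ⧸ (of : G →* HNNExtension G A B φ).range) =
          QuotientGroup.mk (of h * (([] : List (ℤˣ × G)).map
            (fun x => t ^ (x.1 : ℤ) * of x.2)).prod) := by
        rw [QuotientGroup.eq]
        exact ⟨h, by simp⟩
      exact ⟨(SimpleGraph.Walk.nil).copy rfl he, by simp⟩
  | append_singleton l a ih =>
      obtain ⟨p, hp⟩ := ih
      have hprod : (of h : HNNExtension G A B φ) * ((l ++ [a]).map (fun x => t ^ (x.1 : ℤ) * of x.2)).prod =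
          of h * (l.map (fun x => t ^ (x.1 : ℤ) * of x.2)).prod * t ^ (a.1 : ℤ) * of a.2 := by
        simp [mul_assoc]
      have hmk : (QuotientGroup.mk (of h * ((l ++ [a]).map
            (fun x => t ^ (x.1 : ℤ) * of x.2)).prod) :
          HNNExtension G A B φ ⧸ (of : G →* HNNExtension G A B φ).range) =
          QuotientGroup.mk (of h * (l.map (fun x => t ^ (x.1 : ℤ) * of x.2)).prod
            * t ^ (a.1 : ℤ)) := by
        rw [hprod]
        exact mk_mul_of _ _
      rcases adj_or_eq (φ := φ) (of h * (l.map (fun x => t ^ (x.1 : ℤ) * of x.2)).prod) a.1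
        with hadj | heq
      · refine ⟨(p.concat hadj).copy rfl hmk.symm, ?_⟩
        simpa using Nat.add_le_add_right hp 1
      · refine ⟨p.copy rfl (heq.trans hmk.symm), ?_⟩
        simp only [SimpleGraph.Walk.length_copy]
        exact hp.trans (by simp)

/-- Lower bound: a walk from `gH` to the base vertex yields a reduced expression of `g`
of length at most the walk length. -/
theorem exists_reducedWord_of_walk
    {v : HNNExtension G A B φ ⧸ (of : G →* HNNExtension G A B φ).range}
    {v₀ : HNNExtension G A B φ ⧸ (of : G →* HNNExtension G A B φ).range}
    (p : (bassSerreGraph A B φ).Walk v v₀) :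
    v₀ = QuotientGroup.mk 1 → ∀ g : HNNExtension G A B φ, v = QuotientGroup.mk g →
      ∃ w' : ReducedWord G A B, w'.prod φ = g ∧ w'.toList.length ≤ p.length := by
  induction p with
  | nil =>
      intro hv₀ g hg
      rw [hv₀] at hg
      rw [QuotientGroup.eq] at hg
      obtain ⟨h, hh⟩ := hg
      refine ⟨⟨h, [], List.isChain_nil⟩, ?_, by simp⟩
      simp only [ReducedWord.prod, List.map_nil, List.prod_nil, mul_one]
      rw [hh]; simp
  | @cons u v' w huv p ih =>
      intro hv₀ g hg
      obtain ⟨hne, k, hk⟩ := huv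
      have key : ∃ (h : G) (ε : ℤˣ), v' = QuotientGroup.mk (g * of h * t ^ (ε : ℤ)) := by
        rcases hk with ⟨hk1, hk2⟩ | ⟨hk1, hk2⟩
        · rw [hg] at hk1
          rw [QuotientGroup.eq] at hk1
          obtain ⟨h, hh⟩ := hk1
          refine ⟨h, -1, ?_⟩
          rw [hk2]
          have he : g * of h * t ^ ((-1 : ℤˣ) : ℤ) = k * t⁻¹ := by
            rw [hh]; simp [mul_assoc]
          rw [he]
        · rw [hg] at hk2
          rw [QuotientGroup.eq] at hk2
          obtain ⟨h, hh⟩ := hk2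
          refine ⟨h, 1, ?_⟩
          rw [hk1]
          have he : g * of h * t ^ ((1 : ℤˣ) : ℤ) = k := by
            rw [hh]; simp [mul_assoc]
          rw [he]
      obtain ⟨h, ε, hv'⟩ := key
      obtain ⟨w₁, hw₁p, hw₁l⟩ := ih hv₀ _ hv'
      obtain ⟨w₂, hw₂p, hw₂l⟩ := exists_prod_mul_t (φ := φ) w₁ (-ε)
      obtain ⟨w₃, hw₃p, hw₃l⟩ := exists_prod_mul_of (φ := φ) w₂ h⁻¹
      refine ⟨w₃, ?_, ?_⟩
      · rw [hw₃p, hw₂p, hw₁p]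
        simp [mul_assoc, ← zpow_add]
      · rw [hw₃l]
        change _ ≤ p.length + 1
        omega

end BassSerreAux

/-- In the Bass-Serre tree of `Γ = HNN(H, Σ, θ)` (vertices `Γ/H`, positive edges `Γ/Σ`,
source `s(gΣ) = gH`, range `r(gΣ) = g t⁻¹ H`), the geodesic distance between the
vertices `H` and `g·H` equals the length `|g|` of `g`, i.e. the number of occurrences
of `t^{±1}` in a reduced expression of `g` (with `|e| = 0`; a reduced expression is a
`ReducedWord` representing `g`, its length being the length of its list of `t`-letters). -/
theorem bassSerre_dist_eq_length {G : Type*} [Group G] (A B : Subgroup G) (φ : A ≃* B)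
    (g : HNNExtension G A B φ) (w : HNNExtension.NormalWord.ReducedWord G A B)
    (hw : w.prod φ = g) :
    (bassSerreGraph A B φ).dist
        (QuotientGroup.mk 1) (QuotientGroup.mk g) = w.toList.length := by
  subst hw
  obtain ⟨p, hp⟩ := BassSerreAux.exists_walk (φ := φ) w.head w.toList
  have hub : (bassSerreGraph A B φ).dist (QuotientGroup.mk 1) (QuotientGroup.mk (w.prod φ)) ≤
      w.toList.length := le_trans (SimpleGraph.dist_le p) hp
  have hreach : (bassSerreGraph A B φ).Reachable (QuotientGroup.mk 1)
      (QuotientGroup.mk (w.prod φ)) := ⟨p⟩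
  obtain ⟨q, hq⟩ := hreach.exists_walk_length_eq_dist
  obtain ⟨w', hw'p, hw'l⟩ :=
    BassSerreAux.exists_reducedWord_of_walk (φ := φ) q.reverse rfl (w.prod φ) rfl
  have hfst := (HNNExtension.ReducedWord.map_fst_eq_and_of_prod_eq φ
    (hw'p.trans rfl : w'.prod φ = w.prod φ)).1
  have hlen : w'.toList.length = w.toList.length := by
    have := congrArg List.length hfst
    simpa using this
  rw [SimpleGraph.Walk.length_reverse, hq] at hw'l
  omega
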